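/- Let P_L, P_F, M be complete metric spaces (probability simplices with ℓ1 metric). Suppose BR_F : P_L × M → P_F is Lipschitz with constants (d_F^L, d_F^μ), Γ : M × P_L × P_F → M is Lipschitz with constants (d_μ^μ, d_μ^L, d_μ^F), and BR_L : P_F × M → P_L satisfies ‖BR_L(π_F, μ) − BR_L(π_F′, μ′)‖₁ ≤ d_L^F ‖π_F − π_F′‖₁ + d_L^μ ‖μ − μ′‖₁, all constants nonnegative. Assume (i) d_μ^μ + d_μ^F d_F^μ < 1, (ii) d_F^μ + d_μ^μ + d_μ^F < 1 and (d_F^L + d_μ^L)/(1 − (d_F^μ + d_μ^μ + d_μ^F)) < 1, and (iii) max(d_L^F, d_L^μ) · (d_F^L + d_μ^L)/(1 − (d_F^μ + d_μ^μ + d_μ^F)) < 1. Then there exists a unique triple (π_L^SE, π_F^SE, μ^SE) ∈ P_L × P_F × M such that π_F^SE = BR_F(π_L^SE, μ^SE), μ^SE = Γ(μ^SE, π_L^SE, π_F^SE), and π_L^SE = BR_L(π_F^SE, μ^SE); i.e., the stationary Stackelberg mean-field equilibrium exists and is unique. -/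
import Mathlib


/-- Existence and uniqueness of a stationary Stackelberg mean-field equilibrium.
Under the stated Lipschitz conditions on the follower best response `BR_F`, the
mean-field update `Γ`, and the leader best response `BR_L`, with the contraction
conditions (i)–(iii), there exists a unique triple
`(π_L^SE, π_F^SE, μ^SE)` with `π_F^SE = BR_F(π_L^SE, μ^SE)`,
`μ^SE = Γ(μ^SE, π_L^SE, π_F^SE)` and `π_L^SE = BR_L(π_F^SE, μ^SE)`. -/
theorem stackelberg_mfe_exists_unique
    {PL PF M : Type*} [MetricSpace PL] [MetricSpace PF] [MetricSpace M]
    [CompleteSpace PL] [CompleteSpace PF] [CompleteSpace M]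
    [Nonempty PL] [Nonempty PF] [Nonempty M]
    (BRF : PL → M → PF) (Γ : M → PL → PF → M) (BRL : PF → M → PL)
    (dFL dFμ dμμ dμL dμF dLF dLμ : ℝ)
    (hdFL : 0 ≤ dFL) (hdFμ : 0 ≤ dFμ) (hdμμ : 0 ≤ dμμ) (hdμL : 0 ≤ dμL)
    (hdμF : 0 ≤ dμF) (hdLF : 0 ≤ dLF) (hdLμ : 0 ≤ dLμ)
    (hBRF : ∀ (πL πL' : PL) (μ μ' : M),
      dist (BRF πL μ) (BRF πL' μ') ≤ dFL * dist πL πL' + dFμ * dist μ μ')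
    (hΓ : ∀ (μ μ' : M) (πL πL' : PL) (πF πF' : PF),
      dist (Γ μ πL πF) (Γ μ' πL' πF')
        ≤ dμμ * dist μ μ' + dμL * dist πL πL' + dμF * dist πF πF')
    (hBRL : ∀ (πF πF' : PF) (μ μ' : M),
      dist (BRL πF μ) (BRL πF' μ') ≤ dLF * dist πF πF' + dLμ * dist μ μ')
    (hi : dμμ + dμF * dFμ < 1)
    (hii₁ : dFμ + dμμ + dμF < 1)
    (hii₂ : (dFL + dμL) / (1 - (dFμ + dμμ + dμF)) < 1)
    (hiii : max dLF dLμ * ((dFL + dμL) / (1 - (dFμ + dμμ + dμF))) < 1) :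
    ∃! e : PL × PF × M,
      e.2.1 = BRF e.1 e.2.2 ∧
      e.2.2 = Γ e.2.2 e.1 e.2.1 ∧
      e.1 = BRL e.2.1 e.2.2 := by
  -- the inner map on `PF × M`, parametrized by the leader policy
  set k : ℝ := dFμ + dμμ + dμF with hk
  have hk0 : 0 ≤ k := by positivity
  have hk1 : k < 1 := hii₁
  set K : NNReal := ⟨k, hk0⟩ with hK
  have hKr : (K : ℝ) = k := rfl
  set T : PL → PF × M → PF × M := fun πL p => (BRF πL p.2, Γ p.2 πL p.1) with hT
  have hTc : ∀ πL : PL, ContractingWith K (T πL) := by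
    intro πL
    refine ⟨by exact_mod_cast hk1, LipschitzWith.of_dist_le_mul fun p q => ?_⟩
    rw [hKr]
    have hD1 : dist p.1 q.1 ≤ dist p q := le_max_left _ _
    have hD2 : dist p.2 q.2 ≤ dist p q := le_max_right _ _
    have hDn : (0:ℝ) ≤ dist p q := dist_nonneg
    have h1 : dist (BRF πL p.2) (BRF πL q.2) ≤ k * dist p q := by
      have := hBRF πL πL p.2 q.2
      simp only [dist_self, mul_zero, zero_add] at this
      nlinarith
    have h2 : dist (Γ p.2 πL p.1) (Γ q.2 πL q.1) ≤ k * dist p q := by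
      have := hΓ p.2 q.2 πL πL p.1 q.1
      simp only [dist_self, mul_zero, add_zero] at this
      nlinarith
    calc dist (T πL p) (T πL q)
        = max (dist (BRF πL p.2) (BRF πL q.2)) (dist (Γ p.2 πL p.1) (Γ q.2 πL q.1)) :=
          Prod.dist_eq
      _ ≤ k * dist p q := max_le h1 h2
  -- fixed point of the inner map
  set φ : PL → PF × M := fun πL => (hTc πL).fixedPoint (T πL) with hφ
  have hφfix : ∀ πL, T πL (φ πL) = φ πL := fun πL => (hTc πL).fixedPoint_isFixedPt
  have hφ1 : ∀ πL, BRF πL (φ πL).2 = (φ πL).1 := fun πL =>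
    congrArg Prod.fst (hφfix πL)
  have hφ2 : ∀ πL, Γ (φ πL).2 πL (φ πL).1 = (φ πL).2 := fun πL =>
    congrArg Prod.snd (hφfix πL)
  have hφuniq : ∀ (πL : PL) (p : PF × M), T πL p = p → p = φ πL := fun πL p hp =>
    (hTc πL).fixedPoint_unique hp
  -- the key Lipschitz estimate for `φ` in the sum metric
  have h1k : (0:ℝ) < 1 - k := by linarith
  set L : ℝ := (dFL + dμL) / (1 - k) with hL
  have hLnn : 0 ≤ L := div_nonneg (by linarith) h1k.le
  have hφlip : ∀ x y : PL,
      dist (φ x).1 (φ y).1 + dist (φ x).2 (φ y).2 ≤ L * dist x y := by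
    intro x y
    set a := dist (φ x).1 (φ y).1 with ha'
    set b := dist (φ x).2 (φ y).2 with hb'
    set d := dist x y with hd'
    have han : 0 ≤ a := dist_nonneg
    have hbn : 0 ≤ b := dist_nonneg
    have hdn : 0 ≤ d := dist_nonneg
    have ha : a ≤ dFL * d + dFμ * b := by
      have := hBRF x y (φ x).2 (φ y).2
      rw [hφ1 x, hφ1 y] at this
      exact this
    have hb : b ≤ dμμ * b + dμL * d + dμF * a := by
      have := hΓ (φ x).2 (φ y).2 x y (φ x).1 (φ y).1
      rw [hφ2 x, hφ2 y] at this
      exact this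
    have hab : a + b ≤ (dFL + dμL) * d + k * (a + b) := by
      have e1 : dFμ * b ≤ dFμ * (a + b) := by nlinarith
      have e2 : dμμ * b ≤ dμμ * (a + b) := by nlinarith
      have e3 : dμF * a ≤ dμF * (a + b) := by nlinarith
      nlinarith
    rw [hL, div_mul_eq_mul_div, le_div_iff₀ h1k]
    nlinarith
  -- the leader map is a contraction
  set c : ℝ := max dLF dLμ * L with hc
  have hcn : 0 ≤ c := mul_nonneg (le_trans hdLF (le_max_left _ _)) hLnn
  set C : NNReal := ⟨c, hcn⟩ with hC
  set g : PL → PL := fun πL => BRL (φ πL).1 (φ πL).2 with hg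
  have hgc : ContractingWith C g := by
    refine ⟨by exact_mod_cast hiii, LipschitzWith.of_dist_le_mul fun x y => ?_⟩
    have h : dist (g x) (g y) ≤
        dLF * dist (φ x).1 (φ y).1 + dLμ * dist (φ x).2 (φ y).2 :=
      hBRL (φ x).1 (φ y).1 (φ x).2 (φ y).2
    have h2 := hφlip x y
    set a : ℝ := dist (φ x).1 (φ y).1 with ha
    set b : ℝ := dist (φ x).2 (φ y).2 with hb
    set d : ℝ := dist x y with hd
    set D : ℝ := dist (g x) (g y) with hD
    clear_value a b d D
    have han : (0:ℝ) ≤ a := ha ▸ dist_nonneg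
    have hbn : (0:ℝ) ≤ b := hb ▸ dist_nonneg
    have hdn : (0:ℝ) ≤ d := hd ▸ dist_nonneg
    have hm1 : dLF ≤ max dLF dLμ := le_max_left _ _
    have hm2 : dLμ ≤ max dLF dLμ := le_max_right _ _
    have hmn : (0:ℝ) ≤ max dLF dLμ := le_trans hdLF hm1
    have hCr : (C : ℝ) = max dLF dLμ * L := rfl
    rw [hCr, mul_assoc]
    calc D ≤ dLF * a + dLμ * b := h
      _ ≤ max dLF dLμ * a + max dLF dLμ * b :=
          add_le_add (mul_le_mul_of_nonneg_right hm1 han)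
            (mul_le_mul_of_nonneg_right hm2 hbn)
      _ = max dLF dLμ * (a + b) := (mul_add _ _ _).symm
      _ ≤ max dLF dLμ * (L * d) := mul_le_mul_of_nonneg_left h2 hmn
  set πL0 : PL := hgc.fixedPoint g with hπL0
  have hπL0fix : g πL0 = πL0 := hgc.fixedPoint_isFixedPt
  refine ⟨(πL0, (φ πL0).1, (φ πL0).2), ⟨(hφ1 πL0).symm, (hφ2 πL0).symm, hπL0fix.symm⟩, ?_⟩
  rintro ⟨x, pF, mu⟩ ⟨e1, e2, e3⟩
  simp only at e1 e2 e3
  have hfp : T x (pF, mu) = (pF, mu) := by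
    simp only [hT, Prod.mk.injEq]
    exact ⟨e1.symm, e2.symm⟩
  have hpm : (pF, mu) = φ x := hφuniq x _ hfp
  have hxfix : g x = x := by
    rw [hg]
    have h1 : (φ x).1 = pF := by rw [← hpm]
    have h2 : (φ x).2 = mu := by rw [← hpm]
    simp only [h1, h2]
    exact e3.symm
  have hx : x = πL0 := hgc.fixedPoint_unique hxfix
  subst hx
  rw [hpm]
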